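/- arXiv:2410.03367 — 2 statements merged into one kernel-verified Lean document; each statement's English description precedes it below -/
import Mathlib

section
/- The function f(r) := Θ(1,r) = exp((r·log r − r + 1)/(r − 1)) for r > 0, r ≠ 1, with f(1) = 1 and f(0) = 1/e, is concave and strictly increasing on [0,∞). -/
noncomputable def f (r : ℝ) : ℝ :=
  if r = 0 then (Real.exp 1)⁻¹
  else if r = 1 then 1
  else Real.exp ((r * Real.log r - r + 1) / (r - 1))

noncomputable def g (s : ℝ) : ℝ :=
  if (Real.exp 1)⁻¹ < s then Function.invFunOn f (Set.Ici 0) s else 0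

noncomputable def Xi (a c : ℝ) : ℝ :=
  if a = 0 then Real.exp 1 * c else a * g (c / a)

open Real Set Filter MeasureTheory intervalIntegral
open scoped Topology

namespace FAux

noncomputable def hh (r : ℝ) : ℝ := ∫ t in (0:ℝ)..1, Real.log (1 - t + t * r)
noncomputable def ps (r : ℝ) : ℝ := ∫ t in (0:ℝ)..1, t / (1 - t + t * r)
noncomputable def ch (r : ℝ) : ℝ := ∫ t in (0:ℝ)..1, -(t / (1 - t + t * r))^2

lemma u_ge {x t : ℝ} (ht : t ∈ Icc (0:ℝ) 1) : min 1 x ≤ 1 - t + t * x := by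
  rcases le_total (1:ℝ) x with h | h
  · rw [min_eq_left h]; nlinarith [ht.1, ht.2]
  · rw [min_eq_right h]; nlinarith [ht.1, ht.2]

lemma u_pos {r : ℝ} (hr : 0 < r) {t : ℝ} (ht : t ∈ Icc (0:ℝ) 1) : 0 < 1 - t + t * r :=
  lt_of_lt_of_le (lt_min one_pos hr) (u_ge ht)

lemma cont_u (r : ℝ) : Continuous (fun t : ℝ => 1 - t + t * r) := by continuity

lemma contOn_log {r : ℝ} (hr : 0 < r) :
    ContinuousOn (fun t : ℝ => Real.log (1 - t + t * r)) (Icc 0 1) :=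
  ContinuousOn.log (cont_u r).continuousOn (fun t ht => (u_pos hr ht).ne')

lemma contOn_div {r : ℝ} (hr : 0 < r) :
    ContinuousOn (fun t : ℝ => t / (1 - t + t * r)) (Icc 0 1) :=
  ContinuousOn.div continuous_id.continuousOn (cont_u r).continuousOn
    (fun t ht => (u_pos hr ht).ne')

lemma intInt_log {r : ℝ} (hr : 0 < r) :
    IntervalIntegrable (fun t : ℝ => Real.log (1 - t + t * r)) volume 0 1 :=
  ((contOn_log hr).mono (by rw [uIcc_of_le zero_le_one])).intervalIntegrable

lemma intInt_div {r : ℝ} (hr : 0 < r) :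
    IntervalIntegrable (fun t : ℝ => t / (1 - t + t * r)) volume 0 1 :=
  ((contOn_div hr).mono (by rw [uIcc_of_le zero_le_one])).intervalIntegrable

lemma intInt_div_sq {r : ℝ} (hr : 0 < r) :
    IntervalIntegrable (fun t : ℝ => (t / (1 - t + t * r))^2) volume 0 1 :=
  (((contOn_div hr).pow 2).mono (by rw [uIcc_of_le zero_le_one])).intervalIntegrable

/-- closed form of `hh` away from `1`. -/
lemma hh_eq {r : ℝ} (hr : 0 < r) (hr1 : r ≠ 1) :
    hh r = (r * Real.log r - r + 1) / (r - 1) := by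
  have hr1' : r - 1 ≠ 0 := sub_ne_zero.2 hr1
  have key : (∫ t in (0:ℝ)..1, Real.log (1 - t + t * r)) =
      (fun t : ℝ => ((1 - t + t * r) * Real.log (1 - t + t * r) - (1 - t + t * r)) / (r - 1)) 1
      - (fun t : ℝ => ((1 - t + t * r) * Real.log (1 - t + t * r) - (1 - t + t * r)) / (r - 1)) 0 := by
    apply intervalIntegral.integral_eq_sub_of_hasDerivAt
      (f := fun t : ℝ => ((1 - t + t * r) * Real.log (1 - t + t * r) - (1 - t + t * r)) / (r - 1))
      (f' := fun t : ℝ => Real.log (1 - t + t * r))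
    · intro t ht
      rw [uIcc_of_le zero_le_one] at ht
      have hupos : 0 < 1 - t + t * r := u_pos hr ht
      have hu : HasDerivAt (fun s : ℝ => 1 - s + s * r) (r - 1) t := by
        have := ((hasDerivAt_const t (1:ℝ)).sub (hasDerivAt_id t)).add
          ((hasDerivAt_id t).mul_const r)
        exact this.congr_deriv (by ring)
      have hlog : HasDerivAt (fun s : ℝ => Real.log (1 - s + s * r))
          ((1 - t + t * r)⁻¹ * (r - 1)) t :=
        (Real.hasDerivAt_log hupos.ne').comp (h₂ := Real.log) t hu
      have := ((hu.mul hlog).sub hu).div_const (r - 1)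
      refine this.congr_deriv ?_
      field_simp
      rw [div_self (by rw [mul_comm]; exact hupos.ne')]
      ring
    · exact intInt_log hr
  rw [hh, key]
  norm_num
  field_simp
  ring

lemma hh_one : hh 1 = 0 := by
  have : ∀ t : ℝ, 1 - t + t * (1:ℝ) = 1 := fun t => by ring
  simp [hh, this]

lemma f_eq_exp_hh {r : ℝ} (hr : 0 < r) : f r = Real.exp (hh r) := by
  by_cases h1 : r = 1
  · subst h1; simp [f, hh_one]
  · rw [f, if_neg hr.ne', if_neg h1, hh_eq hr h1]

lemma ball_pos {r x : ℝ} (hr : 0 < r) (hx : x ∈ Metric.ball r (r/2)) : r/2 < x := by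
  rw [Metric.mem_ball, Real.dist_eq, abs_lt] at hx
  linarith [hx.1]

lemma u_lb {r x t : ℝ} (hr : 0 < r) (hx : x ∈ Metric.ball r (r/2)) (ht : t ∈ Icc (0:ℝ) 1) :
    min 1 (r/2) ≤ 1 - t + t * x := by
  refine le_trans ?_ (u_ge ht)
  exact le_min (min_le_left _ _) ((min_le_right _ _).trans (ball_pos hr hx).le)

lemma hasDerivAt_hh {r : ℝ} (hr : 0 < r) : HasDerivAt hh (ps r) r := by
  set a := min 1 (r/2) with ha_def
  have ha : 0 < a := lt_min one_pos (by linarith)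
  have H := intervalIntegral.hasDerivAt_integral_of_dominated_loc_of_deriv_le
    (μ := volume) (F := fun x t => Real.log (1 - t + t * x))
    (F' := fun x t => t / (1 - t + t * x)) (x₀ := r) (a := 0) (b := 1)
    (bound := fun _ => 1 / a) (s := Metric.ball r (r/2)) (Metric.ball_mem_nhds r (by linarith))
    ?_ ?_ ?_ ?_ ?_ ?_
  · exact H.2
  · filter_upwards with x
    exact (Real.measurable_log.comp (by fun_prop)).aestronglyMeasurable
  · exact intInt_log hr
  · exact ((measurable_id.div (by fun_prop)) : Measurable fun t : ℝ => t / (1 - t + t * r)).aestronglyMeasurable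
  · filter_upwards with t ht x hx
    rw [uIoc_of_le zero_le_one] at ht
    have ht' : t ∈ Icc (0:ℝ) 1 := ⟨ht.1.le, ht.2⟩
    have hu : a ≤ 1 - t + t * x := u_lb hr hx ht'
    have hupos : 0 < 1 - t + t * x := lt_of_lt_of_le ha hu
    rw [Real.norm_eq_abs, abs_of_nonneg (div_nonneg ht'.1 hupos.le)]
    exact div_le_div₀ zero_le_one ht'.2 ha hu
  · exact intervalIntegrable_const
  · filter_upwards with t ht x hx
    rw [uIoc_of_le zero_le_one] at ht
    have ht' : t ∈ Icc (0:ℝ) 1 := ⟨ht.1.le, ht.2⟩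
    have hupos : 0 < 1 - t + t * x := lt_of_lt_of_le ha (u_lb hr hx ht')
    have hu : HasDerivAt (fun y : ℝ => 1 - t + t * y) t x := by
      simpa using ((hasDerivAt_id x).const_mul t).const_add (1 - t)
    have := (Real.hasDerivAt_log hupos.ne').comp x hu
    refine this.congr_deriv ?_
    rw [div_eq_inv_mul]

lemma hasDerivAt_ps {r : ℝ} (hr : 0 < r) : HasDerivAt ps (ch r) r := by
  set a := min 1 (r/2) with ha_def
  have ha : 0 < a := lt_min one_pos (by linarith)
  have H := intervalIntegral.hasDerivAt_integral_of_dominated_loc_of_deriv_le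
    (μ := volume) (F := fun x t => t / (1 - t + t * x))
    (F' := fun x t => -(t / (1 - t + t * x))^2) (x₀ := r) (a := 0) (b := 1)
    (bound := fun _ => (1 / a)^2) (s := Metric.ball r (r/2)) (Metric.ball_mem_nhds r (by linarith))
    ?_ ?_ ?_ ?_ ?_ ?_
  · exact H.2
  · filter_upwards with x
    exact ((measurable_id.div (by fun_prop)) : Measurable fun t : ℝ => t / (1 - t + t * x)).aestronglyMeasurable
  · exact intInt_div hr
  · exact ((((measurable_id.div (by fun_prop)) : Measurable fun t : ℝ => t / (1 - t + t * r)).pow_const 2).neg).aestronglyMeasurable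
  · filter_upwards with t ht x hx
    rw [uIoc_of_le zero_le_one] at ht
    have ht' : t ∈ Icc (0:ℝ) 1 := ⟨ht.1.le, ht.2⟩
    have hu : a ≤ 1 - t + t * x := u_lb hr hx ht'
    have hupos : 0 < 1 - t + t * x := lt_of_lt_of_le ha hu
    rw [norm_neg, Real.norm_eq_abs, abs_of_nonneg (by positivity)]
    have hle : t / (1 - t + t * x) ≤ 1 / a := div_le_div₀ zero_le_one ht'.2 ha hu
    have hnn : 0 ≤ t / (1 - t + t * x) := div_nonneg ht'.1 hupos.le
    exact pow_le_pow_left₀ hnn hle 2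
  · exact intervalIntegrable_const
  · filter_upwards with t ht x hx
    rw [uIoc_of_le zero_le_one] at ht
    have ht' : t ∈ Icc (0:ℝ) 1 := ⟨ht.1.le, ht.2⟩
    have hupos : 0 < 1 - t + t * x := lt_of_lt_of_le ha (u_lb hr hx ht')
    have hu : HasDerivAt (fun y : ℝ => 1 - t + t * y) t x := by
      simpa using ((hasDerivAt_id x).const_mul t).const_add (1 - t)
    have := (hasDerivAt_const x t).div hu hupos.ne'
    refine this.congr_deriv ?_
    field_simp
    ring

lemma ps_pos {r : ℝ} (hr : 0 < r) : 0 < ps r := by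
  apply intervalIntegral.intervalIntegral_pos_of_pos_on (intInt_div hr)
  · intro t ht
    exact div_pos ht.1 (u_pos hr ⟨ht.1.le, ht.2.le⟩)
  · exact zero_lt_one

/-- Cauchy–Schwarz style inequality. -/
lemma cs {r : ℝ} (hr : 0 < r) : ps r ^ 2 + ch r ≤ 0 := by
  set c := ps r with hc
  have h1 : (0:ℝ) ≤ ∫ t in (0:ℝ)..1, (t / (1 - t + t * r) - c)^2 :=
    intervalIntegral.integral_nonneg zero_le_one (fun t _ => sq_nonneg _)
  have h2 : (∫ t in (0:ℝ)..1, (t / (1 - t + t * r) - c)^2)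
      = (∫ t in (0:ℝ)..1, (t / (1 - t + t * r))^2) - 2 * c * c + c^2 := by
    have e : ∀ t : ℝ, (t / (1 - t + t * r) - c)^2
        = (t / (1 - t + t * r))^2 - 2 * c * (t / (1 - t + t * r)) + c^2 := fun t => by ring
    simp_rw [e]
    rw [intervalIntegral.integral_add (((intInt_div_sq hr).sub
      ((intInt_div hr).const_mul (2*c)))) intervalIntegrable_const,
      intervalIntegral.integral_sub (intInt_div_sq hr) ((intInt_div hr).const_mul (2*c)),
      intervalIntegral.integral_const_mul, intervalIntegral.integral_const]
    simp only [ps] at hc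
    rw [← hc, smul_eq_mul]
    ring
  have h3 : ch r = - ∫ t in (0:ℝ)..1, (t / (1 - t + t * r))^2 := by
    rw [ch, intervalIntegral.integral_neg]
  nlinarith [h1, h2.symm ▸ h1]

lemma hasDerivAt_f {r : ℝ} (hr : 0 < r) :
    HasDerivAt f (Real.exp (hh r) * ps r) r := by
  have H : HasDerivAt (fun x => Real.exp (hh x)) (Real.exp (hh r) * ps r) r :=
    (hasDerivAt_hh hr).exp
  apply H.congr_of_eventuallyEq
  filter_upwards [isOpen_Ioi.mem_nhds hr] with x hx
  exact f_eq_exp_hh hx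

lemma hasDerivAt_deriv_f {r : ℝ} (hr : 0 < r) :
    HasDerivAt (deriv f) (Real.exp (hh r) * ps r * ps r + Real.exp (hh r) * ch r) r := by
  have H : HasDerivAt (fun x => Real.exp (hh x) * ps x)
      (Real.exp (hh r) * ps r * ps r + Real.exp (hh r) * ch r) r :=
    ((hasDerivAt_hh hr).exp).mul (hasDerivAt_ps hr)
  apply H.congr_of_eventuallyEq
  filter_upwards [isOpen_Ioi.mem_nhds hr] with x hx
  exact (hasDerivAt_f hx).deriv

lemma f_contOn : ContinuousOn f (Set.Ici (0:ℝ)) := by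
  intro x hx
  rcases eq_or_lt_of_le (show (0:ℝ) ≤ x from hx) with h | h
  · subst h
    rw [← continuousWithinAt_inter (Iio_mem_nhds one_pos : Iio (1:ℝ) ∈ 𝓝 0)]
    have hG : ContinuousAt (fun x : ℝ => Real.exp ((x * Real.log x - x + 1) / (x - 1))) 0 := by
      apply Real.continuous_exp.continuousAt.comp
      apply ContinuousAt.div
      · exact (Real.continuous_mul_log.continuousAt.sub continuous_id.continuousAt).add
          continuousAt_const
      · exact continuous_id.continuousAt.sub continuousAt_const
      · norm_num
    apply hG.continuousWithinAt.congr
    · intro y hy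
      rcases eq_or_ne y 0 with rfl | hy0
      · simp [f, Real.log_zero, Real.exp_neg]
      · rw [f, if_neg hy0, if_neg (by exact ne_of_lt hy.2)]
    · simp [f, Real.log_zero, Real.exp_neg]
  · exact ((hasDerivAt_f h).continuousAt).continuousWithinAt

end FAux

open FAux in
/-- `f` is concave and strictly increasing on `[0, ∞)`. -/
theorem f_concave_strictMono :
    ConcaveOn ℝ (Set.Ici (0:ℝ)) f ∧ StrictMonoOn f (Set.Ici (0:ℝ)) := by
  constructor
  · apply concaveOn_of_deriv2_nonpos (convex_Ici 0) f_contOn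
    · intro x hx
      rw [interior_Ici] at hx
      exact (hasDerivAt_f hx).differentiableAt.differentiableWithinAt
    · intro x hx
      rw [interior_Ici] at hx
      exact (hasDerivAt_deriv_f hx).differentiableAt.differentiableWithinAt
    · intro x hx
      rw [interior_Ici] at hx
      show deriv (deriv f) x ≤ 0
      rw [(hasDerivAt_deriv_f hx).deriv]
      have := cs hx
      nlinarith [Real.exp_pos (hh x), this]
  · apply strictMonoOn_of_deriv_pos (convex_Ici 0) f_contOn
    intro x hx
    rw [interior_Ici] at hx
    rw [(hasDerivAt_f hx).deriv]
    exact mul_pos (Real.exp_pos _) (ps_pos hx)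
end

section
/- Upper chain rule: for a ≥ 0 and c > 0, setting b = Ξ(a,c), one has (b − a)·log c ≥ H(b) − H(a), where H(x) = x log x − x + 1 (H(0) = 1); moreover equality holds whenever c ≥ a/e. -/
noncomputable def H (x : ℝ) : ℝ := x * Real.log x - x + 1

open Real Set

lemma f_eq {r : ℝ} (h0 : r ≠ 0) (h1 : r ≠ 1) :
    f r = Real.exp ((r * Real.log r - r + 1) / (r - 1)) := by
  simp [f, h0, h1]

lemma f_contOn {S : Set ℝ} (hS : ∀ r ∈ S, r ≠ 0 ∧ r ≠ 1) : ContinuousOn f S := by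
  apply ContinuousOn.congr
    (f := fun r : ℝ => Real.exp ((r * Real.log r - r + 1) / (r - 1)))
  · apply Real.continuous_exp.comp_continuousOn
    apply ContinuousOn.div
    · exact ((continuousOn_id.mul (Real.continuousOn_log.mono (by
        intro r hr; exact (hS r hr).1))).sub continuousOn_id).add continuousOn_const
    · exact continuousOn_id.sub continuousOn_const
    · intro r hr
      have := (hS r hr).2
      intro h; exact this (by linarith [sub_eq_zero.mp h])
  · intro r hr
    exact f_eq (hS r hr).1 (hS r hr).2

lemma f_le_exp {r : ℝ} (h : 1 < r) : f r ≤ Real.exp (r - 1) := by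
  rw [f_eq (by linarith) (by linarith)]
  apply Real.exp_le_exp.mpr
  rw [div_le_iff₀ (by linarith)]
  have hlog : Real.log r ≤ r - 1 := Real.log_le_sub_one_of_pos (by linarith)
  nlinarith

lemma exp_le_f {r : ℝ} (h0 : 0 < r) (h : r < 1) : Real.exp (r - 1) ≤ f r := by
  rw [f_eq (by linarith) (by linarith)]
  apply Real.exp_le_exp.mpr
  rw [le_div_iff_of_neg (by linarith)]
  have hlog : Real.log r ≤ r - 1 := Real.log_le_sub_one_of_pos h0
  nlinarith

lemma logr_sub_one_le_f {r : ℝ} (h : 1 < r) : Real.exp (Real.log r - 1) ≤ f r := by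
  rw [f_eq (by linarith) (by linarith)]
  apply Real.exp_le_exp.mpr
  rw [le_div_iff₀ (by linarith)]
  have hlog : 0 ≤ Real.log r := Real.log_nonneg (by linarith)
  nlinarith

lemma f_small {r : ℝ} (h0 : 0 < r) (h : r < 1) :
    f r = Real.exp (-1 + (-(r * Real.log r)) / (1 - r)) := by
  rw [f_eq (by linarith) (by linarith)]
  congr 1
  have h1 : r - 1 ≠ 0 := by intro hh; linarith [sub_eq_zero.mp hh]
  have h2 : 1 - r ≠ 0 := by intro hh; linarith [sub_eq_zero.mp hh]
  field_simp
  ring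

lemma exists_f_eq {s : ℝ} (hs : (Real.exp 1)⁻¹ < s) : ∃ r ∈ Set.Ici (0:ℝ), f r = s := by
  have hs0 : 0 < s := lt_trans (by positivity) hs
  rcases lt_trichotomy s 1 with h1 | h1 | h1
  · -- e⁻¹ < s < 1
    set ε := 1 + Real.log s with hεdef
    have hε0 : 0 < ε := by
      have : Real.log (Real.exp 1)⁻¹ < Real.log s := Real.log_lt_log (by positivity) hs
      rw [Real.log_inv, Real.log_exp] at this
      simp only [hεdef]; linarith
    have hε1 : ε < 1 := by
      have : Real.log s < 0 := Real.log_neg hs0 h1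
      simp only [hεdef]; linarith
    set t := max (8 / ε) 1 with ht
    have ht1 : 1 ≤ t := le_max_right _ _
    have ht8 : 8 / ε ≤ t := le_max_left _ _
    have ht0 : 0 < t := by linarith
    have htε : 8 ≤ t * ε := (div_le_iff₀ hε0).mp ht8
    set r₀ := Real.exp (-t) with hr₀def
    have hr₀0 : 0 < r₀ := Real.exp_pos _
    have hre : r₀ * Real.exp t = 1 := by
      rw [hr₀def, ← Real.exp_add]; simp
    have hq : t ^ 2 / 4 ≤ Real.exp t := by
      have h2 : Real.exp (t/2) ≥ t/2 + 1 := by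
        have := Real.add_one_le_exp (t/2); linarith
      have : Real.exp t = Real.exp (t/2) * Real.exp (t/2) := by
        rw [← Real.exp_add]; ring_nf
      nlinarith [Real.exp_pos (t/2)]
    have hr₀t2 : r₀ * t ^ 2 ≤ 4 := by nlinarith
    have hr₀half : r₀ ≤ 1/2 := by
      have h1' : r₀ ≤ Real.exp (-1) := Real.exp_le_exp.mpr (by linarith)
      have h2' : Real.exp (-1) ≤ 1/2 := by
        rw [Real.exp_neg, inv_le_iff_one_le_mul₀ (Real.exp_pos 1)]
        nlinarith [Real.add_one_le_exp (1:ℝ)]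
      linarith
    have hr₀ε : r₀ < ε := by
      nlinarith
    have hkey : (-(r₀ * Real.log r₀)) / (1 - r₀) ≤ ε := by
      have hlogr₀ : Real.log r₀ = -t := Real.log_exp _
      rw [hlogr₀, div_le_iff₀ (by linarith)]
      nlinarith
    have hfr₀ : f r₀ ≤ s := by
      rw [f_small hr₀0 (by linarith)]
      have : -1 + (-(r₀ * Real.log r₀)) / (1 - r₀) ≤ Real.log s := by
        simp only [hεdef] at hkey; linarith
      calc Real.exp (-1 + (-(r₀ * Real.log r₀)) / (1 - r₀)) ≤ Real.exp (Real.log s) :=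
            Real.exp_le_exp.mpr this
        _ = s := Real.exp_log hs0
    have hfε : s ≤ f ε := by
      have := exp_le_f hε0 hε1
      have h2 : Real.exp (ε - 1) = s := by
        simp only [hεdef]; rw [show 1 + Real.log s - 1 = Real.log s by ring, Real.exp_log hs0]
      linarith
    have hsub : Icc r₀ ε ⊆ Ioo 0 1 := fun x hx =>
      ⟨lt_of_lt_of_le hr₀0 hx.1, lt_of_le_of_lt hx.2 hε1⟩
    have hcont : ContinuousOn f (Icc r₀ ε) :=
      (f_contOn (fun r hr => ⟨ne_of_gt hr.1, ne_of_lt hr.2⟩)).mono hsub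
    obtain ⟨r, hrmem, hrfr⟩ := intermediate_value_Icc (le_of_lt hr₀ε) hcont ⟨hfr₀, hfε⟩
    exact ⟨r, le_trans (le_of_lt hr₀0) hrmem.1, hrfr⟩
  · exact ⟨1, by norm_num, by rw [← h1]; simp [f, hs0.ne', h1]⟩
  · -- s > 1
    set x₀ := 1 + Real.log s with hx₀def
    have hlogs : 0 < Real.log s := Real.log_pos h1
    have hx₀1 : 1 < x₀ := by simp only [hx₀def]; linarith
    have hfx₀ : f x₀ ≤ s := by
      have := f_le_exp hx₀1
      have h2 : Real.exp (x₀ - 1) = s := by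
        simp only [hx₀def]
        rw [show 1 + Real.log s - 1 = Real.log s by ring, Real.exp_log hs0]
      linarith
    set x₁ := max x₀ (Real.exp 1 * s) with hx₁def
    have hx₀₁ : x₀ ≤ x₁ := le_max_left _ _
    have hes : Real.exp 1 * s ≤ x₁ := le_max_right _ _
    have hx₁1 : 1 < x₁ := lt_of_lt_of_le hx₀1 hx₀₁
    have hfx₁ : s ≤ f x₁ := by
      have h3 : Real.log (Real.exp 1 * s) = 1 + Real.log s := by
        rw [Real.log_mul (Real.exp_ne_zero 1) hs0.ne', Real.log_exp]
      have h4 : 1 + Real.log s ≤ Real.log x₁ := by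
        rw [← h3]
        exact Real.log_le_log (by positivity) hes
      have h5 : Real.exp (Real.log x₁ - 1) ≥ s := by
        calc s = Real.exp (Real.log s) := (Real.exp_log hs0).symm
          _ ≤ Real.exp (Real.log x₁ - 1) := Real.exp_le_exp.mpr (by linarith)
      linarith [logr_sub_one_le_f hx₁1]
    have hsub : Icc x₀ x₁ ⊆ Ioi 1 := fun x hx => lt_of_lt_of_le hx₀1 hx.1
    have hcont : ContinuousOn f (Icc x₀ x₁) :=
      (f_contOn (fun r hr => ⟨(lt_trans one_pos hr).ne', (show (1:ℝ) < r from hr).ne'⟩)).mono hsub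
    obtain ⟨r, hrmem, hrfr⟩ := intermediate_value_Icc hx₀₁ hcont ⟨hfx₀, hfx₁⟩
    exact ⟨r, Set.mem_Ici.mpr (le_trans (by linarith : (0:ℝ) ≤ x₀) hrmem.1), hrfr⟩

lemma key {a r c : ℝ} (ha : 0 < a) (hc : 0 < c) (hr : 0 ≤ r) (hfr : f r = c / a) :
    (a * r - a) * Real.log c = H (a * r) - H a := by
  rcases eq_or_lt_of_le hr with h0 | h0
  · -- r = 0 : c = a / e
    have hf0 : f 0 = (Real.exp 1)⁻¹ := by simp [f]
    have hca : c / a = (Real.exp 1)⁻¹ := by rw [← hfr, ← h0, hf0]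
    have hc' : c = a * (Real.exp 1)⁻¹ := by
      field_simp at hca ⊢; linarith [hca]
    have hlogc : Real.log c = Real.log a - 1 := by
      rw [hc', Real.log_mul ha.ne' (by positivity), Real.log_inv, Real.log_exp]
      ring
    simp only [← h0, mul_zero, H]
    rw [hlogc]
    simp [Real.log_zero]
    ring
  · rcases eq_or_ne r 1 with h1 | h1
    · subst h1
      have : c = a := by
        have hf1 : f 1 = 1 := by simp [f]
        rw [hf1] at hfr
        field_simp at hfr
        linarith
      simp [this]
    · have hfr' : f r = Real.exp ((r * Real.log r - r + 1) / (r - 1)) :=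
        f_eq h0.ne' h1
      have hlog : Real.log (c / a) = (r * Real.log r - r + 1) / (r - 1) := by
        rw [← hfr, hfr', Real.log_exp]
      rw [Real.log_div hc.ne' ha.ne'] at hlog
      have hlogc : Real.log c = Real.log a + (r * Real.log r - r + 1) / (r - 1) := by
        linarith
      have hr1 : r - 1 ≠ 0 := sub_ne_zero.mpr h1
      have hlogar : Real.log (a * r) = Real.log a + Real.log r :=
        Real.log_mul ha.ne' h0.ne'
      simp only [H, hlogar, hlogc]
      field_simp
      ring

lemma g_spec {s : ℝ} (hs : (Real.exp 1)⁻¹ < s) : 0 ≤ g s ∧ f (g s) = s := by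
  obtain ⟨r, hr, hfr⟩ := exists_f_eq hs
  have hmem : s ∈ f '' (Set.Ici 0) := ⟨r, hr, hfr⟩
  constructor
  · rw [g, if_pos hs]
    exact Function.invFunOn_mem hmem
  · rw [g, if_pos hs]
    exact Function.invFunOn_eq hmem

/-- Upper chain rule: for `a ≥ 0`, `c > 0` and `b = Ξ(a,c)`, one has
`(b - a) * log c ≥ H(b) - H(a)`, with equality whenever `c ≥ a / e`. -/
theorem upper_chain_rule (a : ℝ) (ha : 0 ≤ a) (c : ℝ) (hc : 0 < c) :
    H (Xi a c) - H a ≤ (Xi a c - a) * Real.log c ∧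
    (a / Real.exp 1 ≤ c → (Xi a c - a) * Real.log c = H (Xi a c) - H a) := by
  rcases eq_or_lt_of_le ha with h0 | h0
  · -- a = 0
    have hXi : Xi a c = Real.exp 1 * c := by rw [Xi, if_pos h0.symm]
    have hlog : Real.log (Real.exp 1 * c) = 1 + Real.log c := by
      rw [Real.log_mul (Real.exp_ne_zero 1) hc.ne', Real.log_exp]
    have heq : (Xi a c - a) * Real.log c = H (Xi a c) - H a := by
      rw [hXi, ← h0]
      simp only [H, hlog, Real.log_zero]
      ring
    exact ⟨le_of_eq heq.symm, fun _ => heq⟩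
  · -- a > 0
    have hXi : Xi a c = a * g (c / a) := by rw [Xi, if_neg h0.ne']
    by_cases hca : (Real.exp 1)⁻¹ < c / a
    · obtain ⟨hg0, hgf⟩ := g_spec hca
      have heq := key h0 hc hg0 hgf
      rw [← hXi] at heq
      exact ⟨le_of_eq heq.symm, fun _ => heq⟩
    · push_neg at hca
      have hg : g (c / a) = 0 := by rw [g, if_neg (not_lt.mpr hca)]
      have hXi0 : Xi a c = 0 := by rw [hXi, hg, mul_zero]
      have hcae : c ≤ a * (Real.exp 1)⁻¹ := by
        rw [div_le_iff₀ h0] at hca; linarith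
      constructor
      · rw [hXi0]
        simp only [H, Real.log_zero]
        have hlogc : Real.log c ≤ Real.log a - 1 := by
          calc Real.log c ≤ Real.log (a * (Real.exp 1)⁻¹) := Real.log_le_log hc hcae
            _ = Real.log a - 1 := by
              rw [Real.log_mul h0.ne' (by positivity), Real.log_inv, Real.log_exp]; ring
        nlinarith
      · intro hce
        have hce' : a * (Real.exp 1)⁻¹ ≤ c := by
          rw [div_eq_mul_inv] at hce
          exact hce
        have hceq : c = a * (Real.exp 1)⁻¹ := le_antisymm hcae hce'
        have hf0 : f 0 = c / a := by
          simp [f, hceq]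
          field_simp
        have := key h0 hc le_rfl hf0
        rw [mul_zero] at this
        rw [hXi0]
        exact this
end
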